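/- For every n ∈ ℕ with n ≥ 1, the function D_n is convex and continuously differentiable on each open interval (a, a+2) with a ∈ ℤ, a ≥ 0, a + 2 ≤ n, and a ≡ n (mod 2), and additionally, if n is odd, D_n is convex and continuously differentiable on the interval (0,1). -/

import Mathlib

open Classical in
/-- The recursively defined functions `D n : ℝ → ℝ`. -/
noncomputable def D : ℕ → ℝ → ℝ
  | 0, x => if x ≤ 0 then 1 else 0
  | n + 1, x =>
    if x ≤ 0 then 1
    else if ((n : ℝ) + 1) < x then 0
    else if ∃ m : ℤ, x = (m : ℝ) then
      (1 / 2) * D n (x - 1) + (1 / 2) * D n (x + 1)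
    else if Odd n ∧ x < 1 then
      (1 - x) * D n 0 + x * D n 1
    else if Even (⌊x⌋ + (n : ℤ)) then
      (1 / (1 + Int.fract x)) * D n (⌊x⌋ : ℝ)
        + (Int.fract x / (1 + Int.fract x)) * D n (x + 1)
    else
      ((1 - Int.fract x) / (2 - Int.fract x)) * D n (x - 1)
        + (1 / (2 - Int.fract x)) * D n (⌈x⌉ : ℝ)

open Set Filter Topology

lemma D_nonpos (n : ℕ) {x : ℝ} (hx : x ≤ 0) : D n x = 1 := by
  cases n <;> simp [D, hx]

lemma D_gt (n : ℕ) {x : ℝ} (hx : (n : ℝ) < x) : D n x = 0 := by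
  cases n with
  | zero =>
    simp only [D]; rw [if_neg]; push_cast at hx; exact not_le.2 hx
  | succ m =>
    have h0 : ¬ x ≤ 0 := by push_cast at hx; push_neg; nlinarith [Nat.cast_nonneg (α := ℝ) m]
    simp only [D]; rw [if_neg h0, if_pos (by push_cast at hx ⊢; linarith)]

lemma D_nonneg (n : ℕ) (x : ℝ) : 0 ≤ D n x := by
  induction n generalizing x with
  | zero => simp only [D]; split <;> norm_num
  | succ m ih =>
    have hf0 : (0:ℝ) ≤ Int.fract x := Int.fract_nonneg x
    have hf1 : Int.fract x < 1 := Int.fract_lt_one x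
    simp only [D]
    split_ifs with h1 h2 h3 h4 h5
    · norm_num
    · norm_num
    · have := ih (x - 1); have := ih (x + 1)
      nlinarith
    · obtain ⟨ho, hx1⟩ := h4
      have hx0 : 0 < x := not_le.1 h1
      have := ih (0 : ℝ); have := ih (1 : ℝ)
      nlinarith
    · have := ih ((⌊x⌋ : ℤ) : ℝ); have := ih (x + 1)
      have e1 : (0:ℝ) < 1 + Int.fract x := by linarith
      have := mul_nonneg (div_nonneg (zero_le_one) e1.le) (ih ((⌊x⌋ : ℤ) : ℝ))
      have := mul_nonneg (div_nonneg hf0 e1.le) (ih (x + 1))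
      linarith
    · have h2f : (0:ℝ) < 2 - Int.fract x := by linarith
      have h1f : (0:ℝ) ≤ 1 - Int.fract x := by linarith
      have := mul_nonneg (div_nonneg h1f h2f.le) (ih (x - 1))
      have := mul_nonneg (div_nonneg zero_le_one h2f.le) (ih ((⌈x⌉ : ℤ) : ℝ))
      linarith

lemma not_int_of_Ioo {k : ℤ} {x : ℝ} (hx : x ∈ Set.Ioo (k : ℝ) (k + 1)) :
    ¬ ∃ m : ℤ, x = (m : ℝ) := by
  rintro ⟨m, rfl⟩
  have h1 : k < m := by exact_mod_cast hx.1
  have h2 : m < k + 1 := by exact_mod_cast hx.2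
  omega

lemma floor_of_Ioo {k : ℤ} {x : ℝ} (hx : x ∈ Set.Ioo (k : ℝ) (k + 1)) : ⌊x⌋ = k :=
  Int.floor_eq_iff.2 ⟨hx.1.le, by exact_mod_cast hx.2⟩

lemma ceil_of_Ioo {k : ℤ} {x : ℝ} (hx : x ∈ Set.Ioo (k : ℝ) (k + 1)) : ⌈x⌉ = k + 1 :=
  Int.ceil_eq_iff.2 ⟨by push_cast; simpa using hx.1, by exact_mod_cast hx.2.le⟩

lemma D_succ_int (n : ℕ) (k : ℤ) (h1 : 1 ≤ k) (h2 : (k : ℝ) ≤ (n : ℝ) + 1) :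
    D (n + 1) (k : ℝ) = (1 / 2) * D n ((k : ℝ) - 1) + (1 / 2) * D n ((k : ℝ) + 1) := by
  have hk0 : ¬ ((k : ℝ) ≤ 0) := by push_neg; exact_mod_cast h1
  simp only [D]
  rw [if_neg hk0, if_neg (not_lt.2 h2), if_pos ⟨k, rfl⟩]

lemma D_succ_floor (n : ℕ) (k : ℤ) (hk : 0 ≤ k) (hpar : (k + (n : ℤ)) % 2 = 0)
    {x : ℝ} (hx : x ∈ Set.Ioo (k : ℝ) (k + 1)) (hxn : x ≤ (n : ℝ) + 1) :
    D (n + 1) x = (1 / (1 + (x - k))) * D n (k : ℝ)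
      + ((x - k) / (1 + (x - k))) * D n (x + 1) := by
  have hx0 : ¬ (x ≤ 0) := by push_neg; calc (0:ℝ) ≤ k := by exact_mod_cast hk
                                 _ < x := hx.1
  have hfl : ⌊x⌋ = k := floor_of_Ioo hx
  have hfr : Int.fract x = x - k := by rw [Int.fract, hfl]
  have hodd : ¬ (Odd n ∧ x < 1) := by
    rintro ⟨ho, hx1⟩
    have hko : k % 2 = 1 := by
      have : (n : ℤ) % 2 = 1 := Int.odd_iff.1 ((Int.odd_coe_nat n).2 ho)
      omega
    have hk1 : 1 ≤ k := by omega
    have : (1:ℝ) ≤ k := by exact_mod_cast hk1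
    linarith [hx.1]
  simp only [D]
  rw [if_neg hx0, if_neg (not_lt.2 hxn), if_neg (not_int_of_Ioo hx), if_neg hodd,
    if_pos (by rw [hfl]; exact Int.even_iff.2 hpar), hfl, hfr]

lemma D_succ_ceil (n : ℕ) (k : ℤ) (hk : 1 ≤ k) (hpar : (k + (n : ℤ)) % 2 = 1)
    {x : ℝ} (hx : x ∈ Set.Ioo (k : ℝ) (k + 1)) (hxn : x ≤ (n : ℝ) + 1) :
    D (n + 1) x = ((1 - (x - k)) / (2 - (x - k))) * D n (x - 1)
      + (1 / (2 - (x - k))) * D n ((k : ℝ) + 1) := by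
  have hx0 : ¬ (x ≤ 0) := by push_neg; calc (0:ℝ) ≤ k := by exact_mod_cast (by omega : (0:ℤ) ≤ k)
                                 _ < x := hx.1
  have hfl : ⌊x⌋ = k := floor_of_Ioo hx
  have hfr : Int.fract x = x - k := by rw [Int.fract, hfl]
  have hodd : ¬ (Odd n ∧ x < 1) := by
    rintro ⟨ho, hx1⟩
    have : (1:ℝ) ≤ k := by exact_mod_cast hk
    linarith [hx.1]
  have hce : ((⌈x⌉ : ℤ) : ℝ) = (k : ℝ) + 1 := by rw [ceil_of_Ioo hx]; push_cast; ring
  simp only [D]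
  rw [if_neg hx0, if_neg (not_lt.2 hxn), if_neg (not_int_of_Ioo hx), if_neg hodd,
    if_neg (by rw [hfl]; rw [Int.even_iff]; omega), hfr, hce]

lemma D_succ_affine (n : ℕ) (hn : Odd n) {x : ℝ} (hx : x ∈ Set.Ioo (0 : ℝ) 1) :
    D (n + 1) x = (1 - x) * 1 + x * D n 1 := by
  have hx' : x ∈ Set.Ioo ((0 : ℤ) : ℝ) ((0:ℤ) + 1) := by simpa using hx
  have hxn : ¬ ((n : ℝ) + 1 < x) := by
    push_neg; calc x ≤ 1 := hx.2.le
      _ ≤ (n:ℝ) + 1 := by nlinarith [Nat.cast_nonneg (α := ℝ) n]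
  simp only [D]
  rw [if_neg (not_le.2 hx.1), if_neg hxn, if_neg (not_int_of_Ioo hx'), if_pos ⟨hn, hx.2⟩,
    D_nonpos n le_rfl]

lemma D_avg : ∀ (n : ℕ) (m : ℤ), 1 ≤ m → m % 2 = (n : ℤ) % 2 →
    2 * D n (m : ℝ) = D n ((m : ℝ) - 1) + D n ((m : ℝ) + 1) := by
  intro n
  induction n with
  | zero =>
    intro m hm hpar
    have hm2 : 2 ≤ m := by omega
    rw [D_gt 0 (by exact_mod_cast (by omega : (0:ℤ) < m)),
      D_gt 0 (by push_cast; exact_mod_cast (by push_cast; exact_mod_cast (by omega : (0:ℤ) < m - 1) : (0:ℝ) < (m:ℝ) - 1)),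
      D_gt 0 (by push_cast; linarith [(show (1:ℝ) ≤ (m:ℝ) by exact_mod_cast hm)])]
    ring
  | succ n ih =>
    intro m hm hpar
    by_cases hbig : (n : ℤ) + 2 ≤ m
    · -- m ≥ n+3 by parity
      have hm3 : (n : ℤ) + 3 ≤ m := by omega
      have hm3R : ((n:ℝ) + 3) ≤ (m:ℝ) := by exact_mod_cast hm3
      rw [D_gt (n+1) (by push_cast; linarith), D_gt (n+1) (by push_cast; linarith),
        D_gt (n+1) (by push_cast; linarith)]
      ring
    · have hmn : m ≤ (n : ℤ) + 1 := by omega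
      have hmnR : (m : ℝ) ≤ (n : ℝ) + 1 := by exact_mod_cast hmn
      rw [D_succ_int n m hm hmnR]
      by_cases hm1 : m = 1
      · subst hm1
        simp only [Int.cast_one]
        rw [(by norm_num : (1:ℝ) - 1 = 0), D_nonpos (n+1) le_rfl, D_nonpos n le_rfl]
        by_cases hn0 : n = 0
        · subst hn0
          rw [(by norm_num : (1:ℝ) + 1 = ((2:ℤ):ℝ)), D_gt 1 (by norm_num), D_gt 0 (by norm_num)]
          norm_num
        · have hn1 : 1 ≤ (n:ℤ) := by exact_mod_cast Nat.one_le_iff_ne_zero.2 hn0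
          have h2n : (2:ℤ) ≤ (n:ℤ) + 1 := by omega
          have e2 : ((1:ℝ) + 1) = ((2:ℤ):ℝ) := by norm_num
          rw [e2, D_succ_int n 2 (by norm_num) (by push_cast; exact_mod_cast h2n)]
          have ih2 := ih 2 (by norm_num) (by omega)
          norm_num at ih2 ⊢
          linarith
      · have hm2 : 2 ≤ m := by omega
        have e1 : (m : ℝ) - 1 = ((m - 1 : ℤ) : ℝ) := by push_cast; ring
        have e2 : (m : ℝ) + 1 = ((m + 1 : ℤ) : ℝ) := by push_cast; ring
        rw [e1, e2, D_succ_int n (m-1) (by omega) (by push_cast; push_cast at hmnR; linarith)]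
        have ihm1 := ih (m-1) (by omega) (by omega)
        by_cases hmtop : m = (n : ℤ) + 1
        · rw [D_gt (n+1) (by push_cast; exact_mod_cast (by push_cast; rw [hmtop]; push_cast; linarith : ((n:ℝ) + 1) < ((m+1:ℤ):ℝ)))]
          have hDm1 : D n ((m:ℝ) + 1) = 0 := by
            rw [D_gt n (by rw [hmtop]; push_cast; linarith)]
          push_cast at ihm1 ⊢
          rw [hDm1]
          linarith
        · have hmn' : m + 1 ≤ (n : ℤ) + 1 := by omega
          rw [D_succ_int n (m+1) (by omega) (by exact_mod_cast hmn')]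
          have ihp1 := ih (m+1) (by omega) (by omega)
          push_cast at ihm1 ihp1 ⊢
          linarith

-- gradient inequality for functions with monotone derivative
lemma grad_ineq {a b : ℝ} {g g' : ℝ → ℝ}
    (hd : ∀ z ∈ Ioo a b, HasDerivAt g (g' z) z)
    (hm : MonotoneOn g' (Ioo a b)) :
    ∀ p ∈ Ioo a b, ∀ q ∈ Ioo a b, g p + g' p * (q - p) ≤ g q := by
  intro p hp q hq
  rcases lt_trichotomy p q with h | h | h
  · have hsub : Icc p q ⊆ Ioo a b := Icc_subset_Ioo hp.1 hq.2
    obtain ⟨c, hc, hc'⟩ := exists_hasDerivAt_eq_slope g g' h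
      (fun x hx => ((hd x (hsub hx)).continuousAt).continuousWithinAt)
      (fun x hx => hd x (hsub (Ioo_subset_Icc_self hx)))
    have hcm : c ∈ Ioo a b := hsub (Ioo_subset_Icc_self hc)
    have h1 : g' p ≤ g' c := hm hp hcm hc.1.le
    have h2 : g' c * (q - p) = g q - g p := by
      rw [hc', div_mul_cancel₀]
      exact sub_ne_zero.2 (by linarith)
    nlinarith [mul_le_mul_of_nonneg_right h1 (by linarith : (0:ℝ) ≤ q - p)]
  · subst h; simp
  · have hsub : Icc q p ⊆ Ioo a b := Icc_subset_Ioo hq.1 hp.2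
    obtain ⟨c, hc, hc'⟩ := exists_hasDerivAt_eq_slope g g' h
      (fun x hx => ((hd x (hsub hx)).continuousAt).continuousWithinAt)
      (fun x hx => hd x (hsub (Ioo_subset_Icc_self hx)))
    have hcm : c ∈ Ioo a b := hsub (Ioo_subset_Icc_self hc)
    have h1 : g' c ≤ g' p := hm hcm hp hc.2.le
    have h2 : g' c * (p - q) = g p - g q := by
      rw [hc', div_mul_cancel₀]
      exact sub_ne_zero.2 (by linarith)
    nlinarith [mul_le_mul_of_nonneg_right h1 (by linarith : (0:ℝ) ≤ p - q)]

lemma tan_le_right {a b K : ℝ} {g g' : ℝ → ℝ} (hab : a < b)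
    (hd : ∀ z ∈ Ioo a b, HasDerivAt g (g' z) z)
    (hm : MonotoneOn g' (Ioo a b))
    (hK : Filter.Tendsto g (𝓝[>] a) (𝓝 K)) :
    ∀ z ∈ Ioo a b, g z + g' z * (a - z) ≤ K := by
  intro z hz
  have hlim : Tendsto (fun v => g z + g' z * (v - z)) (𝓝[>] a) (𝓝 (g z + g' z * (a - z))) := by
    apply Tendsto.mono_left _ nhdsWithin_le_nhds
    exact (tendsto_const_nhds.add (tendsto_const_nhds.mul ((continuous_id.sub continuous_const).tendsto a)))
  refine le_of_tendsto_of_tendsto hlim hK ?_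
  filter_upwards [Ioo_mem_nhdsGT_of_mem (show a ∈ Ico a z from ⟨le_rfl, hz.1⟩)] with v hv
  exact grad_ineq hd hm z hz v ⟨hv.1, hv.2.trans hz.2⟩

lemma tan_le_left {a b K : ℝ} {g g' : ℝ → ℝ} (hab : a < b)
    (hd : ∀ z ∈ Ioo a b, HasDerivAt g (g' z) z)
    (hm : MonotoneOn g' (Ioo a b))
    (hK : Filter.Tendsto g (𝓝[<] b) (𝓝 K)) :
    ∀ z ∈ Ioo a b, g z + g' z * (b - z) ≤ K := by
  intro z hz
  have hlim : Tendsto (fun v => g z + g' z * (v - z)) (𝓝[<] b) (𝓝 (g z + g' z * (b - z))) := by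
    apply Tendsto.mono_left _ nhdsWithin_le_nhds
    exact (tendsto_const_nhds.add (tendsto_const_nhds.mul ((continuous_id.sub continuous_const).tendsto b)))
  refine le_of_tendsto_of_tendsto hlim hK ?_
  filter_upwards [Ioo_mem_nhdsLT_of_mem (show b ∈ Ioc z b from ⟨hz.2, le_rfl⟩)] with v hv
  exact grad_ineq hd hm z hz v ⟨hz.1.trans hv.1, hv.2⟩

/-- Core lemma: the "moving chord" function `u ↦ ((u-1)h(u)+K)/u` on `(1,2)`. -/
lemma core {h h' : ℝ → ℝ} {K : ℝ}
    (hd : ∀ u ∈ Ioo (0:ℝ) 2, HasDerivAt h (h' u) u)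
    (hm : MonotoneOn h' (Ioo (0:ℝ) 2))
    (hc : ContinuousOn h' (Ioo (0:ℝ) 2))
    (htan : ∀ u ∈ Ioo (0:ℝ) 2, h u - u * h' u ≤ K) :
    (∀ u ∈ Ioo (1:ℝ) 2, HasDerivAt (fun u => ((u - 1) * h u + K) / u)
        ((u * (u - 1) * h' u + h u - K) / u ^ 2) u)
    ∧ MonotoneOn (fun u => (u * (u - 1) * h' u + h u - K) / u ^ 2) (Ioo (1:ℝ) 2)
    ∧ ContinuousOn (fun u => (u * (u - 1) * h' u + h u - K) / u ^ 2) (Ioo (1:ℝ) 2)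
    ∧ Tendsto (fun u => ((u - 1) * h u + K) / u) (𝓝[>] (1:ℝ)) (𝓝 K)
    ∧ Tendsto (fun u => (u * (u - 1) * h' u + h u - K) / u ^ 2) (𝓝[>] (1:ℝ))
        (𝓝 (h 1 - K)) := by
  have hsub : Ioo (1:ℝ) 2 ⊆ Ioo (0:ℝ) 2 := Ioo_subset_Ioo (by norm_num) le_rfl
  have h1m : (1:ℝ) ∈ Ioo (0:ℝ) 2 := by norm_num
  have hco : ContinuousOn h (Ioo (0:ℝ) 2) :=
    fun x hx => (hd x hx).continuousAt.continuousWithinAt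
  have hder : ∀ u ∈ Ioo (1:ℝ) 2, HasDerivAt (fun u => ((u - 1) * h u + K) / u)
      ((u * (u - 1) * h' u + h u - K) / u ^ 2) u := by
    intro u hu
    have hu0 : u ≠ 0 := by have := hu.1; intro h0; rw [h0] at this; linarith
    have H : HasDerivAt (fun u => ((u - 1) * h u + K) / u)
        (((1 * h u + (u - 1) * h' u) * u - ((u - 1) * h u + K) * 1) / u ^ 2) u :=
      ((((hasDerivAt_id u).sub_const 1).mul (hd u (hsub hu))).add_const K).div
        (hasDerivAt_id u) hu0
    convert H using 1
    field_simp
    ring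
  refine ⟨hder, ?_, ?_, ?_, ?_⟩
  · -- monotonicity of the derivative
    intro p hp q hq hpq
    have hp' : p ∈ Ioo (0:ℝ) 2 := hsub hp
    have hq' : q ∈ Ioo (0:ℝ) 2 := hsub hq
    have hA : 0 ≤ h q - h p - h' p * (q - p) := by
      have := grad_ineq hd hm p hp' q hq'; linarith
    have hB : 0 ≤ K - h p + p * h' p := by have := htan p hp'; linarith
    have hC : 0 ≤ h' q - h' p := by have := hm hp' hq' hpq; linarith
    have hp0 : (0:ℝ) < p := by linarith [hp.1]
    have hq0 : (0:ℝ) < q := by linarith [hq.1]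
    rw [div_le_div_iff₀ (by positivity) (by positivity)]
    have key : (q * (q - 1) * h' q + h q - K) * p ^ 2
        - (p * (p - 1) * h' p + h p - K) * q ^ 2
        = p ^ 2 * (h q - h p - h' p * (q - p)) + (q ^ 2 - p ^ 2) * (K - h p + p * h' p)
          + p ^ 2 * q * (q - 1) * (h' q - h' p) := by ring
    nlinarith [mul_nonneg (mul_nonneg (mul_nonneg (sq_nonneg p) hq0.le)
        (by linarith [hp.1, hpq] : (0:ℝ) ≤ q - 1)) hC,
      mul_nonneg (sq_nonneg p) hA,
      mul_nonneg (by nlinarith : (0:ℝ) ≤ q ^ 2 - p ^ 2) hB]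
  · -- continuity of the derivative
    intro u hu
    have hu' : u ∈ Ioo (0:ℝ) 2 := hsub hu
    have hu0 : u ≠ 0 := by have := hu.1; intro h0; rw [h0] at this; linarith
    exact ContinuousWithinAt.div
      (((((continuousWithinAt_id.mul (continuousWithinAt_id.sub continuousWithinAt_const)).mul
        ((hc u hu').mono hsub)).add ((hco u hu').mono hsub)).sub continuousWithinAt_const))
      ((continuousWithinAt_id.pow 2)) (by positivity)
  · -- limit of F at 1⁺
    have hcont : ContinuousAt h 1 := (hd 1 h1m).continuousAt
    have : Tendsto (fun u => ((u - 1) * h u + K) / u) (𝓝 (1:ℝ)) (𝓝 (((1 - 1) * h 1 + K) / 1)) := by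
      exact Tendsto.div (((continuous_id.sub continuous_const).tendsto 1).mul hcont |>.add
        tendsto_const_nhds) (continuous_id.tendsto 1) one_ne_zero
    simpa using this.mono_left nhdsWithin_le_nhds
  · -- limit of F' at 1⁺
    have hcont : ContinuousAt h 1 := (hd 1 h1m).continuousAt
    have hcont' : ContinuousAt h' 1 := hc.continuousAt (Ioo_mem_nhds (by norm_num) (by norm_num))
    have : Tendsto (fun u => (u * (u - 1) * h' u + h u - K) / u ^ 2) (𝓝 (1:ℝ))
        (𝓝 ((1 * (1 - 1) * h' 1 + h 1 - K) / 1 ^ 2)) := by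
      exact Tendsto.div ((((continuous_id.mul (continuous_id.sub continuous_const)).tendsto 1).mul
        hcont' |>.add hcont).sub tendsto_const_nhds)
        ((continuous_id.pow 2).tendsto 1) (by norm_num)
    simpa using this.mono_left nhdsWithin_le_nhds

/-- Gluing two C¹ convex pieces at a point with matching value and derivative limits. -/
lemma glue {f fl' fr' : ℝ → ℝ} {p c q s : ℝ} (hpc : p < c) (hcq : c < q)
    (hld : ∀ x ∈ Ioo p c, HasDerivAt f (fl' x) x)
    (hlm : MonotoneOn fl' (Ioo p c)) (hlc : ContinuousOn fl' (Ioo p c))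
    (hrd : ∀ x ∈ Ioo c q, HasDerivAt f (fr' x) x)
    (hrm : MonotoneOn fr' (Ioo c q)) (hrc : ContinuousOn fr' (Ioo c q))
    (hfl : Tendsto f (𝓝[<] c) (𝓝 (f c))) (hfr : Tendsto f (𝓝[>] c) (𝓝 (f c)))
    (hl's : Tendsto fl' (𝓝[<] c) (𝓝 s)) (hr's : Tendsto fr' (𝓝[>] c) (𝓝 s)) :
    ∃ f', (∀ x ∈ Ioo p q, HasDerivAt f (f' x) x) ∧ MonotoneOn f' (Ioo p q) ∧
      ContinuousOn f' (Ioo p q) := by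
  have hIooL : Ioo p c ∈ 𝓝[<] c := Ioo_mem_nhdsLT_of_mem ⟨hpc, le_rfl⟩
  have hIooR : Ioo c q ∈ 𝓝[>] c := Ioo_mem_nhdsGT_of_mem ⟨le_rfl, hcq⟩
  set f' : ℝ → ℝ := fun x => if x < c then fl' x else if x = c then s else fr' x with hf'def
  have hf'c : f' c = s := by simp [hf'def]
  have hf'lt : ∀ x, x < c → f' x = fl' x := fun x hx => by simp [hf'def, hx]
  have hf'gt : ∀ x, c < x → f' x = fr' x := fun x hx => by
    simp [hf'def, not_lt.2 hx.le, ne_of_gt hx]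
  -- derivative at c
  have hdc : HasDerivAt f s c := by
    have hB : HasDerivWithinAt f s (Iic c) c := by
      apply hasDerivWithinAt_Iic_of_tendsto_deriv
        (fun x hx => (hld x hx).differentiableAt.differentiableWithinAt)
        (hfl.mono_left (nhdsWithin_mono c Ioo_subset_Iio_self)) hIooL
      apply hl's.congr'
      filter_upwards [hIooL] with x hx using ((hld x hx).deriv).symm
    have hA : HasDerivWithinAt f s (Ici c) c := by
      apply hasDerivWithinAt_Ici_of_tendsto_deriv
        (fun x hx => (hrd x hx).differentiableAt.differentiableWithinAt)
        (hfr.mono_left (nhdsWithin_mono c Ioo_subset_Ioi_self)) hIooR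
      apply hr's.congr'
      filter_upwards [hIooR] with x hx using ((hrd x hx).deriv).symm
    simpa using hB.union hA
  have hLle : ∀ x ∈ Ioo p c, fl' x ≤ s := by
    intro x hx
    refine ge_of_tendsto hl's ?_
    filter_upwards [Ioo_mem_nhdsLT_of_mem (show c ∈ Ioc x c from ⟨hx.2, le_rfl⟩)] with z hz
    exact hlm hx ⟨hx.1.trans hz.1, hz.2⟩ hz.1.le
  have hRge : ∀ x ∈ Ioo c q, s ≤ fr' x := by
    intro x hx
    refine le_of_tendsto hr's ?_
    filter_upwards [Ioo_mem_nhdsGT_of_mem (show c ∈ Ico c x from ⟨le_rfl, hx.1⟩)] with z hz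
    exact hrm ⟨hz.1, hz.2.trans hx.2⟩ hx hz.2.le
  refine ⟨f', ?_, ?_, ?_⟩
  · intro x hx
    rcases lt_trichotomy x c with h | h | h
    · rw [hf'lt x h]; exact hld x ⟨hx.1, h⟩
    · subst h; rw [hf'c]; exact hdc
    · rw [hf'gt x h]; exact hrd x ⟨h, hx.2⟩
  · intro x hx y hy hxy
    rcases lt_trichotomy x c with h | h | h <;> rcases lt_trichotomy y c with h2 | h2 | h2
    · rw [hf'lt x h, hf'lt y h2]; exact hlm ⟨hx.1, h⟩ ⟨hy.1, h2⟩ hxy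
    · subst h2; rw [hf'lt x h, hf'c]; exact hLle x ⟨hx.1, h⟩
    · rw [hf'lt x h, hf'gt y h2]
      exact (hLle x ⟨hx.1, h⟩).trans (hRge y ⟨h2, hy.2⟩)
    · linarith
    · subst h; subst h2; exact le_rfl
    · subst h; rw [hf'c, hf'gt y h2]; exact hRge y ⟨h2, hy.2⟩
    · linarith
    · linarith
    · rw [hf'gt x h, hf'gt y h2]; exact hrm ⟨h, hx.2⟩ ⟨h2, hy.2⟩ hxy
  · intro x hx
    rcases lt_trichotomy x c with h | h | h
    · have : ContinuousAt f' x := by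
        apply ((hlc x ⟨hx.1, h⟩).continuousAt (isOpen_Ioo.mem_nhds ⟨hx.1, h⟩)).congr
        filter_upwards [Iio_mem_nhds h] with z hz using (hf'lt z hz).symm
      exact this.continuousWithinAt
    · subst h
      have : ContinuousAt f' x := by
        unfold ContinuousAt
        rw [hf'c, ← nhdsLT_sup_nhdsGE x]
        rw [tendsto_sup]
        constructor
        · exact hl's.congr' (by filter_upwards [self_mem_nhdsWithin] with z hz
            using (hf'lt z hz).symm)
        · have : Ici x = {x} ∪ Ioi x := by
            ext z; simp [eq_comm, le_iff_lt_or_eq, or_comm]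
          rw [this, nhdsWithin_union, tendsto_sup, nhdsWithin_singleton]
          constructor
          · have := tendsto_pure_nhds f' x; rwa [hf'c] at this
          · exact hr's.congr' (by filter_upwards [self_mem_nhdsWithin] with z hz
              using (hf'gt z hz).symm)
      exact this.continuousWithinAt
    · have : ContinuousAt f' x := by
        apply ((hrc x ⟨h, hx.2⟩).continuousAt (isOpen_Ioo.mem_nhds ⟨h, hx.2⟩)).congr
        filter_upwards [Ioi_mem_nhds h] with z hz using (hf'gt z hz).symm
      exact this.continuousWithinAt

lemma tendsto_add_nhdsGT (c d : ℝ) : Tendsto (fun x : ℝ => x + d) (𝓝[>] c) (𝓝[>] (c + d)) := by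
  apply tendsto_nhdsWithin_of_tendsto_nhds_of_eventually_within
  · exact ((continuous_id.add continuous_const).tendsto c).mono_left nhdsWithin_le_nhds
  · filter_upwards [self_mem_nhdsWithin] with x hx
    simpa using hx

lemma tendsto_sub_nhdsGT (c d : ℝ) : Tendsto (fun x : ℝ => x - d) (𝓝[>] c) (𝓝[>] (c - d)) := by
  simpa [sub_eq_add_neg] using tendsto_add_nhdsGT c (-d)

lemma tendsto_add_nhdsLT (c d : ℝ) : Tendsto (fun x : ℝ => x + d) (𝓝[<] c) (𝓝[<] (c + d)) := by
  apply tendsto_nhdsWithin_of_tendsto_nhds_of_eventually_within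
  · exact ((continuous_id.add continuous_const).tendsto c).mono_left nhdsWithin_le_nhds
  · filter_upwards [self_mem_nhdsWithin] with x hx
    simpa using hx

lemma tendsto_reflect_nhdsLT (c e : ℝ) : Tendsto (fun x : ℝ => e - x) (𝓝[<] c) (𝓝[>] (e - c)) := by
  apply tendsto_nhdsWithin_of_tendsto_nhds_of_eventually_within
  · exact ((continuous_const.sub continuous_id).tendsto c).mono_left nhdsWithin_le_nhds
  · filter_upwards [self_mem_nhdsWithin] with x hx
    exact sub_lt_sub_left hx e

/-- Hypotheses of `core` hold for `u ↦ D n (c + u)`, `K = D n c`. -/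
lemma good_right (n : ℕ) (c : ℤ) (hc0 : 0 ≤ c) (hcn : c ≤ (n : ℤ)) (hpar : c % 2 = (n : ℤ) % 2)
    (ihA : c + 2 ≤ (n : ℤ) → ∃ g', (∀ x ∈ Ioo ((c : ℝ)) ((c : ℝ) + 2), HasDerivAt (D n) (g' x) x)
      ∧ MonotoneOn g' (Ioo (c : ℝ) ((c : ℝ) + 2)) ∧ ContinuousOn g' (Ioo (c : ℝ) ((c : ℝ) + 2)))
    (ihCr : c + 2 ≤ (n : ℤ) → Tendsto (D n) (𝓝[>] (c : ℝ)) (𝓝 (D n (c : ℝ)))) :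
    ∃ h', (∀ u ∈ Ioo (0:ℝ) 2, HasDerivAt (fun u => D n ((c : ℝ) + u)) (h' u) u) ∧
      MonotoneOn h' (Ioo (0:ℝ) 2) ∧ ContinuousOn h' (Ioo (0:ℝ) 2) ∧
      (∀ u ∈ Ioo (0:ℝ) 2, D n ((c : ℝ) + u) - u * h' u ≤ D n (c : ℝ)) := by
  by_cases hc2 : c + 2 ≤ (n : ℤ)
  · obtain ⟨g', hg, hgm, hgc⟩ := ihA hc2
    have hmem : ∀ u ∈ Ioo (0:ℝ) 2, (c : ℝ) + u ∈ Ioo ((c:ℝ)) ((c:ℝ) + 2) := by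
      intro u hu; exact ⟨by linarith [hu.1], by linarith [hu.2]⟩
    refine ⟨fun u => g' ((c : ℝ) + u), ?_, ?_, ?_, ?_⟩
    · intro u hu
      have h1 : HasDerivAt (fun u : ℝ => (c : ℝ) + u) 1 u := (hasDerivAt_id u).const_add _
      have := (hg _ (hmem u hu)).comp u h1
      simpa [Function.comp_def] using this
    · intro u1 h1 u2 h2 h12
      exact hgm (hmem _ h1) (hmem _ h2) (by linarith)
    · exact hgc.comp ((continuous_const.add continuous_id).continuousOn) hmem
    · intro u hu
      have htan := tan_le_right (by linarith : (c:ℝ) < (c:ℝ) + 2) hg hgm (ihCr hc2)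
        ((c:ℝ) + u) (hmem u hu)
      have e : g' ((c:ℝ) + u) * ((c:ℝ) - ((c:ℝ) + u)) = -(u * g' ((c:ℝ) + u)) := by ring
      rw [e] at htan; linarith
  · have hceq : c = (n : ℤ) := by omega
    refine ⟨fun _ => 0, ?_, ?_, ?_, ?_⟩
    · intro u hu
      have : ∀ v ∈ Ioo (0:ℝ) 2, D n ((c:ℝ) + v) = 0 := by
        intro v hv
        apply D_gt
        have : ((c:ℤ):ℝ) = (n:ℝ) := by rw [hceq]; push_cast; ring
        rw [this]; linarith [hv.1]
      have hcongr : (fun u => D n ((c:ℝ) + u)) =ᶠ[𝓝 u] (fun _ => (0:ℝ)) := by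
        filter_upwards [isOpen_Ioo.mem_nhds hu] with v hv using this v hv
      exact (hasDerivAt_const u 0).congr_of_eventuallyEq hcongr
    · intro u1 _ u2 _ _; exact le_rfl
    · exact continuousOn_const
    · intro u hu
      have : D n ((c:ℝ) + u) = 0 := by
        apply D_gt
        have : ((c:ℤ):ℝ) = (n:ℝ) := by rw [hceq]; push_cast; ring
        rw [this]; linarith [hu.1]
      rw [this]; simpa using D_nonneg n (c:ℝ)

/-- Hypotheses of `core` hold for `u ↦ D n (c - u)`, `K = D n c`. -/
lemma good_left (n : ℕ) (c : ℤ) (hc0 : 2 ≤ c) (hcn : c ≤ (n : ℤ)) (hpar : c % 2 = (n : ℤ) % 2)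
    (ihA : ∃ g', (∀ x ∈ Ioo ((c : ℝ) - 2) ((c : ℝ)), HasDerivAt (D n) (g' x) x)
      ∧ MonotoneOn g' (Ioo ((c : ℝ) - 2) (c : ℝ)) ∧ ContinuousOn g' (Ioo ((c : ℝ) - 2) (c : ℝ)))
    (ihCl : Tendsto (D n) (𝓝[<] (c : ℝ)) (𝓝 (D n (c : ℝ)))) :
    ∃ h', (∀ u ∈ Ioo (0:ℝ) 2, HasDerivAt (fun u => D n ((c : ℝ) - u)) (h' u) u) ∧
      MonotoneOn h' (Ioo (0:ℝ) 2) ∧ ContinuousOn h' (Ioo (0:ℝ) 2) ∧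
      (∀ u ∈ Ioo (0:ℝ) 2, D n ((c : ℝ) - u) - u * h' u ≤ D n (c : ℝ)) := by
  obtain ⟨g', hg, hgm, hgc⟩ := ihA
  have hmem : ∀ u ∈ Ioo (0:ℝ) 2, (c : ℝ) - u ∈ Ioo ((c:ℝ) - 2) ((c:ℝ)) := by
    intro u hu; exact ⟨by linarith [hu.2], by linarith [hu.1]⟩
  refine ⟨fun u => -g' ((c : ℝ) - u), ?_, ?_, ?_, ?_⟩
  · intro u hu
    have h1 : HasDerivAt (fun u : ℝ => (c : ℝ) - u) (-1) u := by
      simpa using (hasDerivAt_id u).const_sub ((c:ℝ))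
    have := (hg _ (hmem u hu)).comp u h1
    rw [Function.comp_def] at this
    exact this.congr_deriv (by simp only [mul_neg_one])
  · intro u1 h1 u2 h2 h12
    have := hgm (hmem _ h2) (hmem _ h1) (by linarith)
    dsimp only; linarith
  · exact (hgc.comp ((continuous_const.sub continuous_id).continuousOn) hmem).neg
  · intro u hu
    have htan := tan_le_left (by linarith : (c:ℝ) - 2 < (c:ℝ)) hg hgm ihCl
      ((c:ℝ) - u) (hmem u hu)
    have e : g' ((c:ℝ) - u) * ((c:ℝ) - ((c:ℝ) - u)) = -(u * -(g' ((c:ℝ) - u))) := by ring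
    rw [e] at htan; dsimp only; linarith

lemma pieceR (n : ℕ) (c : ℤ) (hc0 : 0 ≤ c) (hcn : c ≤ (n : ℤ)) (hpar : c % 2 = (n : ℤ) % 2)
    (hgood : ∃ h', (∀ u ∈ Ioo (0:ℝ) 2, HasDerivAt (fun u => D n ((c : ℝ) + u)) (h' u) u) ∧
      MonotoneOn h' (Ioo (0:ℝ) 2) ∧ ContinuousOn h' (Ioo (0:ℝ) 2) ∧
      (∀ u ∈ Ioo (0:ℝ) 2, D n ((c : ℝ) + u) - u * h' u ≤ D n (c : ℝ))) :
    ∃ r', (∀ x ∈ Ioo ((c:ℝ)) ((c:ℝ) + 1), HasDerivAt (D (n+1)) (r' x) x) ∧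
      MonotoneOn r' (Ioo (c:ℝ) ((c:ℝ) + 1)) ∧ ContinuousOn r' (Ioo (c:ℝ) ((c:ℝ) + 1)) ∧
      Tendsto (D (n+1)) (𝓝[>] (c:ℝ)) (𝓝 (D n (c:ℝ))) ∧
      Tendsto r' (𝓝[>] (c:ℝ)) (𝓝 (D n ((c:ℝ) + 1) - D n (c:ℝ))) := by
  obtain ⟨h', hd, hm, hc, htan⟩ := hgood
  obtain ⟨Fd, Fm, Fc, FT, F'T⟩ := core hd hm hc htan
  set F : ℝ → ℝ := fun u => ((u - 1) * D n ((c:ℝ) + u) + D n (c:ℝ)) / u with hF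
  set F' : ℝ → ℝ := fun u => (u * (u - 1) * h' u + D n ((c:ℝ) + u) - D n (c:ℝ)) / u ^ 2 with hF'
  have hcnR : (c : ℝ) ≤ (n : ℝ) := by exact_mod_cast hcn
  have hσmem : ∀ x ∈ Ioo ((c:ℝ)) ((c:ℝ)+1), x + (1 - (c:ℝ)) ∈ Ioo (1:ℝ) 2 := by
    intro x hx; exact ⟨by linarith [hx.1], by linarith [hx.2]⟩
  have hEq : ∀ y ∈ Ioo ((c:ℝ)) ((c:ℝ)+1), D (n+1) y = F (y + (1 - (c:ℝ))) := by
    intro y hy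
    rw [D_succ_floor n c hc0 (by omega) hy (by linarith [hy.2])]
    have e : (c:ℝ) + (y + (1 - (c:ℝ))) = y + 1 := by ring
    rw [hF]
    simp only []
    rw [e]
    have hden : (1:ℝ) + (y - (c:ℝ)) ≠ 0 := by intro h0; have := hy.1; nlinarith [hy.1]
    have hden2 : y + (1 - (c:ℝ)) ≠ 0 := by intro h0; nlinarith [hy.1]
    field_simp
    ring
  have hIoo : Ioo ((c:ℝ)) ((c:ℝ)+1) ∈ 𝓝[>] ((c:ℝ)) :=
    Ioo_mem_nhdsGT_of_mem ⟨le_rfl, by linarith⟩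
  refine ⟨fun x => F' (x + (1 - (c:ℝ))), ?_, ?_, ?_, ?_, ?_⟩
  · intro x hx
    have hσd : HasDerivAt (fun x : ℝ => x + (1 - (c:ℝ))) 1 x := (hasDerivAt_id x).add_const _
    have hFd := (Fd _ (hσmem x hx)).comp x hσd
    have : HasDerivAt (fun x => F (x + (1 - (c:ℝ)))) (F' (x + (1 - (c:ℝ)))) x := by
      simpa [Function.comp_def] using hFd
    apply this.congr_of_eventuallyEq
    filter_upwards [isOpen_Ioo.mem_nhds hx] with y hy using hEq y hy
  · intro x hx y hy hxy
    exact Fm (hσmem x hx) (hσmem y hy) (by linarith)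
  · exact Fc.comp ((continuous_id.add continuous_const).continuousOn) hσmem
  · have hshift : Tendsto (fun x : ℝ => x + (1 - (c:ℝ))) (𝓝[>] (c:ℝ)) (𝓝[>] (1:ℝ)) := by
      have := tendsto_add_nhdsGT ((c:ℝ)) (1 - (c:ℝ))
      simpa using this
    have := FT.comp hshift
    apply this.congr'
    filter_upwards [hIoo] with y hy using (hEq y hy).symm
  · have hshift : Tendsto (fun x : ℝ => x + (1 - (c:ℝ))) (𝓝[>] (c:ℝ)) (𝓝[>] (1:ℝ)) := by
      have := tendsto_add_nhdsGT ((c:ℝ)) (1 - (c:ℝ))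
      simpa using this
    have := F'T.comp hshift
    simpa [Function.comp_def] using this

lemma pieceL (n : ℕ) (c : ℤ) (hc0 : 2 ≤ c) (hcn : c ≤ (n : ℤ)) (hpar : c % 2 = (n : ℤ) % 2)
    (hgood : ∃ h', (∀ u ∈ Ioo (0:ℝ) 2, HasDerivAt (fun u => D n ((c : ℝ) - u)) (h' u) u) ∧
      MonotoneOn h' (Ioo (0:ℝ) 2) ∧ ContinuousOn h' (Ioo (0:ℝ) 2) ∧
      (∀ u ∈ Ioo (0:ℝ) 2, D n ((c : ℝ) - u) - u * h' u ≤ D n (c : ℝ))) :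
    ∃ l', (∀ x ∈ Ioo ((c:ℝ) - 1) ((c:ℝ)), HasDerivAt (D (n+1)) (l' x) x) ∧
      MonotoneOn l' (Ioo ((c:ℝ) - 1) (c:ℝ)) ∧ ContinuousOn l' (Ioo ((c:ℝ) - 1) (c:ℝ)) ∧
      Tendsto (D (n+1)) (𝓝[<] (c:ℝ)) (𝓝 (D n (c:ℝ))) ∧
      Tendsto l' (𝓝[<] (c:ℝ)) (𝓝 (D n (c:ℝ) - D n ((c:ℝ) - 1))) := by
  obtain ⟨h', hd, hm, hc, htan⟩ := hgood
  obtain ⟨Fd, Fm, Fc, FT, F'T⟩ := core hd hm hc htan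
  set F : ℝ → ℝ := fun u => ((u - 1) * D n ((c:ℝ) - u) + D n (c:ℝ)) / u with hF
  set F' : ℝ → ℝ := fun u => (u * (u - 1) * h' u + D n ((c:ℝ) - u) - D n (c:ℝ)) / u ^ 2 with hF'
  have hcnR : (c : ℝ) ≤ (n : ℝ) := by exact_mod_cast hcn
  have hc0R : (2 : ℝ) ≤ (c : ℝ) := by exact_mod_cast hc0
  have hσmem : ∀ x ∈ Ioo ((c:ℝ) - 1) ((c:ℝ)), (c:ℝ) + 1 - x ∈ Ioo (1:ℝ) 2 := by
    intro x hx; exact ⟨by linarith [hx.2], by linarith [hx.1]⟩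
  have hEq : ∀ y ∈ Ioo ((c:ℝ) - 1) ((c:ℝ)), D (n+1) y = F ((c:ℝ) + 1 - y) := by
    intro y hy
    have ecast : ((c - 1 : ℤ) : ℝ) = (c:ℝ) - 1 := by push_cast; ring
    have hmem : y ∈ Set.Ioo (((c-1:ℤ)) : ℝ) (((c-1:ℤ)  : ℝ) + 1) := by
      rw [ecast]; exact ⟨hy.1, by linarith [hy.2]⟩
    rw [D_succ_ceil n (c-1) (by omega) (by omega) hmem (by linarith [hy.2])]
    rw [hF]
    simp only []
    have e : (c:ℝ) - ((c:ℝ) + 1 - y) = y - 1 := by ring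
    rw [e, ecast]
    have e2 : (c:ℝ) - 1 + 1 = (c:ℝ) := by ring
    rw [e2]
    have hden : (2:ℝ) - (y - ((c:ℝ) - 1)) ≠ 0 := by intro h0; linarith [hy.2]
    have hden2 : (c:ℝ) + 1 - y ≠ 0 := by intro h0; linarith [hy.2]
    field_simp
    ring
  have hIoo : Ioo ((c:ℝ) - 1) ((c:ℝ)) ∈ 𝓝[<] ((c:ℝ)) :=
    Ioo_mem_nhdsLT_of_mem ⟨by linarith, le_rfl⟩
  have hshift : Tendsto (fun x : ℝ => (c:ℝ) + 1 - x) (𝓝[<] (c:ℝ)) (𝓝[>] (1:ℝ)) := by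
    have := tendsto_reflect_nhdsLT ((c:ℝ)) ((c:ℝ) + 1)
    simpa using this
  refine ⟨fun x => -F' ((c:ℝ) + 1 - x), ?_, ?_, ?_, ?_, ?_⟩
  · intro x hx
    have hσd : HasDerivAt (fun x : ℝ => (c:ℝ) + 1 - x) (-1) x := by
      simpa using (hasDerivAt_id x).const_sub ((c:ℝ) + 1)
    have hFd := (Fd _ (hσmem x hx)).comp x hσd
    have : HasDerivAt (fun x => F ((c:ℝ) + 1 - x)) (-F' ((c:ℝ) + 1 - x)) x := by
      rw [Function.comp_def] at hFd
      exact hFd.congr_deriv (by simp only [hF', mul_neg_one])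
    apply this.congr_of_eventuallyEq
    filter_upwards [isOpen_Ioo.mem_nhds hx] with y hy using hEq y hy
  · intro x hx y hy hxy
    have := Fm (hσmem y hy) (hσmem x hx) (by linarith)
    dsimp only; linarith
  · exact (Fc.comp ((continuous_const.sub continuous_id).continuousOn) hσmem).neg
  · have := FT.comp hshift
    apply this.congr'
    filter_upwards [hIoo] with y hy using (hEq y hy).symm
  · have := (F'T.comp hshift).neg
    rw [neg_sub] at this
    exact this

lemma D_succ_affine' (n : ℕ) (hn : Odd n) {x : ℝ} (hx : x ∈ Set.Ioo (0 : ℝ) 1) :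
    D (n + 1) x = 1 + x * (D n 1 - 1) := by
  rw [D_succ_affine n hn hx]; ring

lemma pieceL1 (n : ℕ) (hodd : Odd n) :
    (∀ x ∈ Ioo (0:ℝ) 1, HasDerivAt (D (n+1)) (D n 1 - 1) x) ∧
      Tendsto (D (n+1)) (𝓝[<] (1:ℝ)) (𝓝 (D n 1)) := by
  have hIoo : Ioo (0:ℝ) 1 ∈ 𝓝[<] (1:ℝ) := Ioo_mem_nhdsLT_of_mem ⟨by norm_num, le_rfl⟩
  refine ⟨?_, ?_⟩
  · intro x hx
    have haff : HasDerivAt (fun y : ℝ => 1 + y * (D n 1 - 1)) (D n 1 - 1) x := by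
      simpa using ((hasDerivAt_id x).mul_const (D n 1 - 1)).const_add (1:ℝ)
    apply haff.congr_of_eventuallyEq
    filter_upwards [isOpen_Ioo.mem_nhds hx] with y hy using D_succ_affine' n hodd hy
  · have hT : Tendsto (fun y : ℝ => 1 + y * (D n 1 - 1)) (𝓝[<] (1:ℝ))
        (𝓝 (1 + 1 * (D n 1 - 1))) := by
      exact (tendsto_const_nhds.add ((continuous_id.mul continuous_const).tendsto 1)).mono_left
        nhdsWithin_le_nhds
    have : (1:ℝ) + 1 * (D n 1 - 1) = D n 1 := by ring
    rw [this] at hT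
    apply hT.congr'
    filter_upwards [hIoo] with y hy using (D_succ_affine' n hodd hy).symm
-- master induction, to be appended after testing
lemma master (n : ℕ) :
    (∀ c : ℤ, 0 ≤ c → c + 2 ≤ (n:ℤ) → c % 2 = (n:ℤ) % 2 →
      Tendsto (D n) (𝓝[>] (c:ℝ)) (𝓝 (D n (c:ℝ)))) ∧
    (∀ c : ℤ, 2 ≤ c → c ≤ (n:ℤ) → c % 2 = (n:ℤ) % 2 →
      Tendsto (D n) (𝓝[<] (c:ℝ)) (𝓝 (D n (c:ℝ)))) ∧
    (∀ a : ℤ, 0 ≤ a → a + 2 ≤ (n:ℤ) → a % 2 = (n:ℤ) % 2 →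
      ∃ f', (∀ x ∈ Ioo ((a:ℝ)) ((a:ℝ)+2), HasDerivAt (D n) (f' x) x) ∧
        MonotoneOn f' (Ioo (a:ℝ) ((a:ℝ)+2)) ∧ ContinuousOn f' (Ioo (a:ℝ) ((a:ℝ)+2))) ∧
    (Odd n → ∃ f', (∀ x ∈ Ioo (0:ℝ) 1, HasDerivAt (D n) (f' x) x) ∧
      MonotoneOn f' (Ioo (0:ℝ) 1) ∧ ContinuousOn f' (Ioo (0:ℝ) 1)) := by
  induction n with
  | zero =>
    refine ⟨fun c h1 h2 _ => absurd h2 (by omega), fun c h1 h2 _ => absurd h2 (by omega),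
      fun a h1 h2 _ => absurd h2 (by omega), fun h => absurd h (by decide)⟩
  | succ n ih =>
    obtain ⟨ihCr, ihCl, ihA, ihB⟩ := ih
    have hnn : (0:ℝ) ≤ (n:ℝ) := Nat.cast_nonneg n
    -- good_right instances
    have goodR : ∀ c : ℤ, 0 ≤ c → c ≤ (n:ℤ) → c % 2 = (n:ℤ) % 2 →
        ∃ h', (∀ u ∈ Ioo (0:ℝ) 2, HasDerivAt (fun u => D n ((c : ℝ) + u)) (h' u) u) ∧
          MonotoneOn h' (Ioo (0:ℝ) 2) ∧ ContinuousOn h' (Ioo (0:ℝ) 2) ∧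
          (∀ u ∈ Ioo (0:ℝ) 2, D n ((c : ℝ) + u) - u * h' u ≤ D n (c : ℝ)) := by
      intro c h1 h2 h3
      exact good_right n c h1 h2 h3 (fun hc2 => ihA c h1 hc2 h3) (fun hc2 => ihCr c h1 hc2 h3)
    have goodL : ∀ c : ℤ, 2 ≤ c → c ≤ (n:ℤ) → c % 2 = (n:ℤ) % 2 →
        ∃ h', (∀ u ∈ Ioo (0:ℝ) 2, HasDerivAt (fun u => D n ((c : ℝ) - u)) (h' u) u) ∧
          MonotoneOn h' (Ioo (0:ℝ) 2) ∧ ContinuousOn h' (Ioo (0:ℝ) 2) ∧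
          (∀ u ∈ Ioo (0:ℝ) 2, D n ((c : ℝ) - u) - u * h' u ≤ D n (c : ℝ)) := by
      intro c h1 h2 h3
      have h := ihA (c-2) (by omega) (by omega) (by omega)
      rw [show ((c-2:ℤ):ℝ) = (c:ℝ) - 2 from by push_cast; ring,
        show (c:ℝ) - 2 + 2 = (c:ℝ) from by ring] at h
      exact good_left n c h1 h2 h3 h (ihCl c h1 h2 h3)
    have hDc : ∀ c : ℤ, 1 ≤ c → c ≤ (n:ℤ) + 1 → c % 2 = (n:ℤ) % 2 →
        D (n+1) (c:ℝ) = D n (c:ℝ) := by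
      intro c h1 h2 h3
      rw [D_succ_int n c h1 (by exact_mod_cast h2)]
      have := D_avg n c h1 h3
      linarith
    refine ⟨?_, ?_, ?_, ?_⟩
    · -- Cr (n+1)
      intro c h0 h2 hp
      have hp' : c % 2 = ((n:ℤ) + 1) % 2 := by push_cast at hp; omega
      by_cases hc0 : c = 0
      · subst hc0
        have hodd : Odd n := by
          rw [Nat.odd_iff]; omega
        have hT : Tendsto (fun y : ℝ => 1 + y * (D n 1 - 1)) (𝓝[>] (0:ℝ))
            (𝓝 (1 + 0 * (D n 1 - 1))) := by
          exact (tendsto_const_nhds.add ((continuous_id.mul continuous_const).tendsto 0)).mono_left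
            nhdsWithin_le_nhds
        rw [show (1:ℝ) + 0 * (D n 1 - 1) = 1 from by ring] at hT
        have : Tendsto (D (n+1)) (𝓝[>] (0:ℝ)) (𝓝 1) := by
          apply hT.congr'
          filter_upwards [Ioo_mem_nhdsGT_of_mem (show (0:ℝ) ∈ Ico (0:ℝ) 1 from ⟨le_rfl, by norm_num⟩)]
            with y hy using (D_succ_affine' n hodd hy).symm
        simpa [D_nonpos (n+1) (le_refl (0:ℝ))] using this
      · have hc1 : 1 ≤ c := by omega
        have hc1R : (1:ℝ) ≤ (c:ℝ) := by exact_mod_cast hc1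
        have hcnR : (c:ℝ) ≤ (n:ℝ) - 1 := by
          have h9 : (c:ℝ) + 1 ≤ ((n:ℤ):ℝ) := by exact_mod_cast (by omega : c + 1 ≤ (n:ℤ))
          push_cast at h9; linarith
        have hform : ∀ y ∈ Ioo ((c:ℝ)) ((c:ℝ)+1), D (n+1) y =
            ((1 - (y - (c:ℝ))) / (2 - (y - (c:ℝ)))) * D n (y-1)
              + (1 / (2 - (y - (c:ℝ)))) * D n ((c:ℝ)+1) := by
          intro y hy
          exact D_succ_ceil n c hc1 (by omega) hy (by linarith [hy.2])
        have hg : Tendsto (fun y : ℝ => D n (y-1)) (𝓝[>] (c:ℝ)) (𝓝 (D n ((c:ℝ)-1))) := by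
          have base := ihCr (c-1) (by omega) (by omega) (by omega)
          rw [show ((c-1:ℤ):ℝ) = (c:ℝ) - 1 from by push_cast; ring] at base
          exact base.comp (tendsto_sub_nhdsGT (c:ℝ) 1)
        have hα : Tendsto (fun y : ℝ => y - (c:ℝ)) (𝓝[>] (c:ℝ)) (𝓝 0) := by
          have h9 : Tendsto (fun y : ℝ => y - (c:ℝ)) (𝓝 (c:ℝ)) (𝓝 ((c:ℝ) - (c:ℝ))) :=
            (continuous_id.sub continuous_const).tendsto (c:ℝ)
          rw [sub_self] at h9
          exact h9.mono_left nhdsWithin_le_nhds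
        have hT : Tendsto (fun y => ((1 - (y - (c:ℝ))) / (2 - (y - (c:ℝ)))) * D n (y-1)
              + (1 / (2 - (y - (c:ℝ)))) * D n ((c:ℝ)+1)) (𝓝[>] (c:ℝ))
            (𝓝 (((1 - 0) / (2 - 0)) * D n ((c:ℝ)-1) + (1 / (2 - 0)) * D n ((c:ℝ)+1))) := by
          exact (((tendsto_const_nhds.sub hα).div (tendsto_const_nhds.sub hα)
              (by norm_num)).mul hg).add
            ((tendsto_const_nhds.div (tendsto_const_nhds.sub hα) (by norm_num)).mul
              tendsto_const_nhds)
        rw [show ((1:ℝ) - 0) / (2 - 0) * D n ((c:ℝ)-1) + 1 / (2 - 0) * D n ((c:ℝ)+1)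
            = (1/2) * D n ((c:ℝ)-1) + (1/2) * D n ((c:ℝ)+1) from by norm_num,
          ← D_succ_int n c hc1 (by linarith)] at hT
        apply hT.congr'
        filter_upwards [Ioo_mem_nhdsGT_of_mem
          (show (c:ℝ) ∈ Ico ((c:ℝ)) ((c:ℝ)+1) from ⟨le_rfl, by linarith⟩)] with y hy
          using (hform y hy).symm
    · -- Cl (n+1)
      intro c h2 hle hp
      have hp' : c % 2 = ((n:ℤ) + 1) % 2 := by push_cast at hp; omega
      have hc2R : (2:ℝ) ≤ (c:ℝ) := by exact_mod_cast h2
      have hcnR : (c:ℝ) ≤ (n:ℝ) + 1 := by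
        have h9 : ((c:ℤ):ℝ) ≤ ((n+1:ℤ):ℝ) := by exact_mod_cast (by omega : c ≤ (n:ℤ) + 1)
        push_cast at h9; linarith
      have hform : ∀ y ∈ Ioo ((c:ℝ)-1) ((c:ℝ)), D (n+1) y =
          (1 / (1 + (y - ((c:ℝ)-1)))) * D n ((c:ℝ)-1)
            + ((y - ((c:ℝ)-1)) / (1 + (y - ((c:ℝ)-1)))) * D n (y+1) := by
        intro y hy
        have ec : ((c-1:ℤ):ℝ) = (c:ℝ) - 1 := by push_cast; ring
        have hmem : y ∈ Ioo (((c-1:ℤ)):ℝ) (((c-1:ℤ):ℝ) + 1) := by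
          rw [ec]; exact ⟨hy.1, by linarith [hy.2]⟩
        have := D_succ_floor n (c-1) (by omega) (by omega) hmem (by linarith [hy.2])
        rwa [ec] at this
      have hg1 : Tendsto (fun y : ℝ => D n (y+1)) (𝓝[<] (c:ℝ)) (𝓝 (D n ((c:ℝ)+1))) := by
        by_cases hcn' : c + 1 ≤ (n:ℤ)
        · have base := ihCl (c+1) (by omega) hcn' (by omega)
          rw [show ((c+1:ℤ):ℝ) = (c:ℝ) + 1 from by push_cast; ring] at base
          exact base.comp (tendsto_add_nhdsLT (c:ℝ) 1)
        · have hceq : c = (n:ℤ) + 1 := by omega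
          have hcR : (c:ℝ) = (n:ℝ) + 1 := by rw [hceq]; push_cast; ring
          have hz : D n ((c:ℝ)+1) = 0 := D_gt n (by rw [hcR]; linarith)
          rw [hz]
          apply tendsto_const_nhds.congr'
          filter_upwards [Ioo_mem_nhdsLT_of_mem
            (show (c:ℝ) ∈ Ioc ((c:ℝ)-1) ((c:ℝ)) from ⟨by linarith, le_rfl⟩)] with y hy
          exact (D_gt n (by rw [hcR] at hy; linarith [hy.1])).symm
      have hα : Tendsto (fun y : ℝ => y - ((c:ℝ)-1)) (𝓝[<] (c:ℝ)) (𝓝 1) := by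
        have h9 : Tendsto (fun y : ℝ => y - ((c:ℝ)-1)) (𝓝 (c:ℝ)) (𝓝 ((c:ℝ) - ((c:ℝ)-1))) :=
          (continuous_id.sub continuous_const).tendsto (c:ℝ)
        rw [show (c:ℝ) - ((c:ℝ)-1) = 1 from by ring] at h9
        exact h9.mono_left nhdsWithin_le_nhds
      have hT : Tendsto (fun y => (1 / (1 + (y - ((c:ℝ)-1)))) * D n ((c:ℝ)-1)
            + ((y - ((c:ℝ)-1)) / (1 + (y - ((c:ℝ)-1)))) * D n (y+1)) (𝓝[<] (c:ℝ))
          (𝓝 ((1 / (1 + 1)) * D n ((c:ℝ)-1) + (1 / (1 + 1)) * D n ((c:ℝ)+1))) := by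
        exact ((tendsto_const_nhds.div (tendsto_const_nhds.add hα) (by norm_num)).mul
            tendsto_const_nhds).add
          ((hα.div (tendsto_const_nhds.add hα) (by norm_num)).mul hg1)
      rw [show ((1:ℝ) / (1 + 1)) * D n ((c:ℝ)-1) + (1 / (1 + 1)) * D n ((c:ℝ)+1)
          = (1/2) * D n ((c:ℝ)-1) + (1/2) * D n ((c:ℝ)+1) from by norm_num,
        ← D_succ_int n c (by omega) (by linarith)] at hT
      apply hT.congr'
      filter_upwards [Ioo_mem_nhdsLT_of_mem
        (show (c:ℝ) ∈ Ioc ((c:ℝ)-1) ((c:ℝ)) from ⟨by linarith, le_rfl⟩)] with y hy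
        using (hform y hy).symm
    · -- A (n+1)
      intro a h0 h2 hp
      set c : ℤ := a + 1 with hcdef
      have hc1 : 1 ≤ c := by omega
      have hcn : c ≤ (n:ℤ) := by push_cast at h2; omega
      have hcp : c % 2 = (n:ℤ) % 2 := by push_cast at hp; omega
      have hc1R : (1:ℝ) ≤ (c:ℝ) := by exact_mod_cast hc1
      obtain ⟨r', hrd, hrm, hrc, hrT, hr'T⟩ := pieceR n c (by omega) hcn hcp
        (goodR c (by omega) hcn hcp)
      have havg := D_avg n c hc1 hcp
      have hDceq : D (n+1) (c:ℝ) = D n (c:ℝ) := hDc c hc1 (by omega) hcp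
      have e1 : ((a:ℤ):ℝ) = (c:ℝ) - 1 := by rw [hcdef]; push_cast; ring
      rw [e1, show (c:ℝ) - 1 + 2 = (c:ℝ) + 1 from by ring]
      have hrT' : Tendsto (D (n+1)) (𝓝[>] (c:ℝ)) (𝓝 (D (n+1) (c:ℝ))) := by
        rwa [hDceq]
      by_cases hceq1 : c = 1
      · -- left piece is affine, n odd
        have hodd : Odd n := by rw [Nat.odd_iff]; omega
        obtain ⟨hld, hlT⟩ := pieceL1 n hodd
        have hc1' : (c:ℝ) = 1 := by rw [hceq1]; norm_num
        rw [hc1'] at havg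
        rw [show (1:ℝ) - 1 = 0 from by norm_num, D_nonpos n le_rfl] at havg
        apply glue (by linarith : (c:ℝ) - 1 < (c:ℝ)) (by linarith : (c:ℝ) < (c:ℝ) + 1)
          (fl' := fun _ => D n 1 - 1) (fr' := r') (s := D n ((c:ℝ)+1) - D n (c:ℝ))
        · intro x hx
          exact hld x ⟨by rw [hc1'] at hx; linarith [hx.1], by rw [hc1'] at hx; linarith [hx.2]⟩
        · intro x _ y _ _; exact le_rfl
        · exact continuousOn_const
        · exact hrd
        · exact hrm
        · exact hrc
        · rw [hc1'] at hDceq ⊢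
          rw [hDceq]
          exact hlT
        · exact hrT'
        · have e : D n 1 - 1 = D n ((1:ℝ)+1) - D n 1 := by linarith
          rw [hc1', ← e]
          exact tendsto_const_nhds
        · exact hr'T
      · -- general left piece
        have hc2 : 2 ≤ c := by omega
        obtain ⟨l', hld, hlm, hlc, hlT, hl'T⟩ := pieceL n c hc2 hcn hcp
          (goodL c hc2 hcn hcp)
        apply glue (by linarith : (c:ℝ) - 1 < (c:ℝ)) (by linarith : (c:ℝ) < (c:ℝ) + 1)
          (fl' := l') (fr' := r') (s := D n ((c:ℝ)+1) - D n (c:ℝ))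
        · exact hld
        · exact hlm
        · exact hlc
        · exact hrd
        · exact hrm
        · exact hrc
        · rwa [hDceq]
        · exact hrT'
        · have : D n ((c:ℝ)) - D n ((c:ℝ)-1) = D n ((c:ℝ)+1) - D n ((c:ℝ)) := by linarith
          rwa [this] at hl'T
        · exact hr'T
    · -- B (n+1)
      intro hodd
      have hne : (0:ℤ) % 2 = (n:ℤ) % 2 := by
        rcases hodd with ⟨k, hk⟩
        omega
      obtain ⟨r', hrd, hrm, hrc, _, _⟩ := pieceR n 0 le_rfl (by exact_mod_cast Nat.zero_le n) hne
        (goodR 0 le_rfl (by exact_mod_cast Nat.zero_le n) hne)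
      rw [show ((0:ℤ):ℝ) = (0:ℝ) from by norm_num, zero_add] at hrd hrm hrc
      exact ⟨r', hrd, hrm, hrc⟩

/-- for `n ≥ 1`, the function `D n` is convex and continuously
differentiable on every interval `(a, a+2)` with `a ∈ ℤ`, `0 ≤ a`, `a + 2 ≤ n` and
`a ≡ n (mod 2)`, and, when `n` is odd, also on `(0, 1)`. -/
theorem D_convexOn_and_contDiffOn (n : ℕ) (hn : 1 ≤ n) :
    (∀ a : ℤ, 0 ≤ a → a + 2 ≤ (n : ℤ) → a % 2 = (n : ℤ) % 2 →
      ConvexOn ℝ (Set.Ioo (a : ℝ) ((a : ℝ) + 2)) (D n) ∧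
      (∀ x ∈ Set.Ioo (a : ℝ) ((a : ℝ) + 2), DifferentiableAt ℝ (D n) x) ∧
      ContinuousOn (deriv (D n)) (Set.Ioo (a : ℝ) ((a : ℝ) + 2))) ∧
    (Odd n →
      ConvexOn ℝ (Set.Ioo (0 : ℝ) 1) (D n) ∧
      (∀ x ∈ Set.Ioo (0 : ℝ) 1, DifferentiableAt ℝ (D n) x) ∧
      ContinuousOn (deriv (D n)) (Set.Ioo (0 : ℝ) 1)) := by
  
  obtain ⟨_, _, hA, hB⟩ := master n
  constructor
  · intro a h0 h2 hp
    obtain ⟨f', hd, hm, hc⟩ := hA a h0 h2 hp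
    have cont : ContinuousOn (D n) (Ioo ((a:ℝ)) ((a:ℝ)+2)) :=
      fun x hx => (hd x hx).continuousAt.continuousWithinAt
    refine ⟨?_, fun x hx => (hd x hx).differentiableAt, ?_⟩
    · refine MonotoneOn.convexOn_of_deriv (convex_Ioo _ _) cont ?_ ?_
      · rw [interior_Ioo]
        exact fun x hx => (hd x hx).differentiableAt.differentiableWithinAt
      · rw [interior_Ioo]
        intro x hx y hy hxy
        rw [(hd x hx).deriv, (hd y hy).deriv]
        exact hm hx hy hxy
    · exact hc.congr (fun x hx => (hd x hx).deriv)
  · intro hodd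
    obtain ⟨f', hd, hm, hc⟩ := hB hodd
    have cont : ContinuousOn (D n) (Ioo (0:ℝ) 1) :=
      fun x hx => (hd x hx).continuousAt.continuousWithinAt
    refine ⟨?_, fun x hx => (hd x hx).differentiableAt, ?_⟩
    · refine MonotoneOn.convexOn_of_deriv (convex_Ioo _ _) cont ?_ ?_
      · rw [interior_Ioo]
        exact fun x hx => (hd x hx).differentiableAt.differentiableWithinAt
      · rw [interior_Ioo]
        intro x hx y hy hxy
        rw [(hd x hx).deriv, (hd y hy).deriv]
        exact hm hx hy hxy
    · exact hc.congr (fun x hx => (hd x hx).deriv)
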